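/- arXiv:1209.0824 — 6 statements merged into one kernel-verified Lean document; each statement's English description precedes it below -/
import Mathlib

section
/- For every positive integer m, ξ(m) = (1/m^m) · Σ_{j=0}^{m} m^j · m!/j!, where ξ(m) := Σ_{k=0}^{m} C(m,k) (k/m)^k (1 − k/m)^{m−k} (with the convention 0^0 = 1). -/
open Finset

lemma altS : ∀ m : ℕ, ∀ d : ℕ, d ≤ m →
    ∑ k ∈ range (m + 1), (-1 : ℝ) ^ k * (m.choose k : ℝ) * (k : ℝ) ^ d =
      if d = m then (-1 : ℝ) ^ m * (m.factorial : ℝ) else 0 := by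
  intro m
  induction m with
  | zero =>
    intro d hd
    interval_cases d
    simp
  | succ m ih =>
    intro d hd
    match d with
    | 0 =>
      rw [if_neg (by omega)]
      have h : ∑ k ∈ range (m + 1 + 1), (-1 : ℝ) ^ k * ((m+1).choose k : ℝ) * (k : ℝ) ^ 0
          = ((-1 : ℝ) + 1) ^ (m + 1) := by
        rw [add_pow]
        exact Finset.sum_congr rfl (fun k _ => by simp)
      rw [h]
      norm_num
    | e + 1 =>
      have he : e ≤ m := by omega
      have step : ∑ k ∈ range (m + 1 + 1), (-1 : ℝ) ^ k * ((m+1).choose k : ℝ) * (k : ℝ) ^ (e+1)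
          = -((m : ℝ) + 1) * ∑ t ∈ range (e + 1), (e.choose t : ℝ) *
              ∑ i ∈ range (m + 1), (-1 : ℝ) ^ i * (m.choose i : ℝ) * (i : ℝ) ^ t := by
        rw [Finset.sum_range_succ']
        have h0 : (-1 : ℝ) ^ 0 * ((m+1).choose 0 : ℝ) * ((0:ℕ) : ℝ) ^ (e+1) = 0 := by simp
        rw [h0, add_zero]
        have hterm : ∀ i ∈ range (m + 1),
            (-1 : ℝ) ^ (i+1) * ((m+1).choose (i+1) : ℝ) * ((i+1 : ℕ) : ℝ) ^ (e+1)
            = -((m : ℝ) + 1) * ∑ t ∈ range (e + 1), (e.choose t : ℝ) *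
                ((-1 : ℝ) ^ i * (m.choose i : ℝ) * (i : ℝ) ^ t) := by
          intro i _
          have h1 : ((m+1).choose (i+1) : ℝ) * ((i:ℝ) + 1) = ((m : ℝ) + 1) * (m.choose i : ℝ) := by
            have := Nat.add_one_mul_choose_eq m i
            have := congrArg (Nat.cast (R := ℝ)) this
            push_cast at this
            linarith [this]
          have h3 : ((i:ℝ) + 1) ^ e = ∑ t ∈ range (e+1), (i:ℝ) ^ t * (e.choose t : ℝ) := by
            rw [add_pow]
            exact Finset.sum_congr rfl (fun t _ => by simp)
          push_cast
          rw [pow_succ ((i:ℝ)+1) e, h3, Finset.sum_mul, Finset.mul_sum, Finset.mul_sum]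
          refine Finset.sum_congr rfl (fun t _ => ?_)
          linear_combination ((-1:ℝ)^(i+1) * (i:ℝ)^t * (e.choose t : ℝ)) * h1
        rw [Finset.sum_congr rfl hterm, ← Finset.mul_sum, Finset.sum_comm]
        congr 1
        exact Finset.sum_congr rfl (fun t _ => (Finset.mul_sum _ _ _).symm)
      rw [step]
      have hin : ∀ t ∈ range (e + 1),
          (e.choose t : ℝ) * ∑ i ∈ range (m + 1), (-1 : ℝ) ^ i * (m.choose i : ℝ) * (i : ℝ) ^ t
          = (e.choose t : ℝ) * (if t = m then (-1 : ℝ) ^ m * (m.factorial : ℝ) else 0) := by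
        intro t ht
        rw [ih t (by simp at ht; omega)]
      rw [Finset.sum_congr rfl hin]
      rcases Nat.eq_or_lt_of_le he with rfl | hlt
      · rw [if_pos rfl]
        simp only [mul_ite, mul_zero]
        rw [Finset.sum_ite_eq' (range (e+1)) e]
        simp [Nat.factorial_succ, pow_succ]
        ring
      · rw [if_neg (by omega)]
        have : ∀ t ∈ range (e + 1),
            (e.choose t : ℝ) * (if t = m then (-1 : ℝ) ^ m * (m.factorial : ℝ) else 0) = 0 := by
          intro t ht
          rw [if_neg (by simp at ht; omega), mul_zero]
        rw [Finset.sum_congr rfl this]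
        simp

lemma keyId (n : ℕ) :
    ∑ k ∈ range (n + 1), (n.choose k : ℝ) * (k : ℝ) ^ k * ((n : ℝ) - k) ^ (n - k) =
      ∑ j ∈ range (n + 1), (n.choose j : ℝ) * ((n - j).factorial : ℝ) * (n : ℝ) ^ j := by
  have expand : ∀ k ∈ range (n + 1),
      (n.choose k : ℝ) * (k : ℝ) ^ k * ((n : ℝ) - k) ^ (n - k)
      = ∑ j ∈ range (n + 1), (n.choose k : ℝ) * (k : ℝ) ^ k *
          ((n : ℝ) ^ j * (-(k:ℝ)) ^ (n - k - j) * ((n-k).choose j : ℝ)) := by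
    intro k hk
    have hk' : k ≤ n := by simp at hk; omega
    have hb : ((n : ℝ) - k) ^ (n - k)
        = ∑ j ∈ range (n - k + 1), (n : ℝ) ^ j * (-(k:ℝ)) ^ (n - k - j) * ((n-k).choose j : ℝ) := by
      rw [← add_pow]
      ring_nf
    rw [hb, Finset.mul_sum]
    apply Finset.sum_subset
    · intro j hj; simp at hj ⊢; omega
    · intro j hj hj'
      simp only [mem_range] at hj hj'
      rw [Nat.choose_eq_zero_of_lt (show n - k < j by omega)]
      simp
  rw [Finset.sum_congr rfl expand, Finset.sum_comm]
  refine Finset.sum_congr rfl (fun j hj => ?_)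
  have hj' : j ≤ n := by simp at hj; omega
  -- truncate k-sum to range (n - j + 1)
  have trunc : ∑ k ∈ range (n + 1), (n.choose k : ℝ) * (k : ℝ) ^ k *
        ((n : ℝ) ^ j * (-(k:ℝ)) ^ (n - k - j) * ((n-k).choose j : ℝ))
      = ∑ k ∈ range (n - j + 1), (n.choose k : ℝ) * (k : ℝ) ^ k *
        ((n : ℝ) ^ j * (-(k:ℝ)) ^ (n - k - j) * ((n-k).choose j : ℝ)) := by
    symm
    apply Finset.sum_subset
    · intro k hk; simp at hk ⊢; omega
    · intro k hk hk'
      simp only [mem_range] at hk hk'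
      rw [Nat.choose_eq_zero_of_lt (show n - k < j by omega)]
      simp
  rw [trunc]
  have hterm : ∀ k ∈ range (n - j + 1),
      (n.choose k : ℝ) * (k : ℝ) ^ k *
        ((n : ℝ) ^ j * (-(k:ℝ)) ^ (n - k - j) * ((n-k).choose j : ℝ))
      = ((n.choose j : ℝ) * (n : ℝ) ^ j * (-1:ℝ) ^ (n - j)) *
          ((-1 : ℝ) ^ k * (((n-j).choose k : ℝ)) * (k : ℝ) ^ (n - j)) := by
    intro k hk
    have hkj : k ≤ n - j := by simp at hk; omega
    have h1 : n - k - j = n - j - k := by omega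
    have hcc : (n.choose k) * ((n-k).choose j) = (n.choose j) * ((n-j).choose k) := by
      have h := Nat.choose_mul (n := n) (show k ≤ n - j from hkj)
      rw [Nat.choose_symm hj'] at h
      have h3 : (n - k).choose (n - j - k) = (n - k).choose j := by
        have he : n - j - k = (n - k) - j := by omega
        rw [he, Nat.choose_symm (by omega : j ≤ n - k)]
      rw [h3] at h
      exact h.symm
    have hpow : (k : ℝ) ^ k * (k : ℝ) ^ (n - j - k) = (k : ℝ) ^ (n - j) := by
      rw [← pow_add]
      congr 1
      omega
    have hneg : (-1:ℝ) ^ (n - j) * (-1:ℝ) ^ k = (-1:ℝ) ^ (n - j - k) := by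
      have hs : n - j - k + k = n - j := by omega
      rw [← hs, pow_add, mul_assoc, ← mul_pow]
      norm_num
    have hnk : (-(k:ℝ)) ^ (n - k - j) = (-1:ℝ) ^ (n - j - k) * (k:ℝ) ^ (n - j - k) := by
      rw [h1, neg_pow]
    have hccR : (n.choose k : ℝ) * ((n-k).choose j : ℝ) = (n.choose j : ℝ) * ((n-j).choose k : ℝ) := by
      exact_mod_cast congrArg (Nat.cast (R := ℝ)) hcc
    rw [hnk, ← hneg]
    calc (n.choose k : ℝ) * (k : ℝ) ^ k *
          ((n : ℝ) ^ j * ((-1:ℝ) ^ (n-j) * (-1:ℝ)^k * (k:ℝ) ^ (n - j - k)) * ((n-k).choose j : ℝ))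
        = ((n.choose k : ℝ) * ((n-k).choose j : ℝ)) * (n : ℝ) ^ j * (-1:ℝ)^(n-j) * (-1:ℝ)^k *
            ((k : ℝ) ^ k * (k:ℝ) ^ (n - j - k)) := by ring
      _ = _ := by rw [hccR, hpow]; ring
  rw [Finset.sum_congr rfl hterm, ← Finset.mul_sum,
    altS (n - j) (n - j) le_rfl]
  rw [if_pos rfl]
  have : (-1:ℝ) ^ (n - j) * ((-1:ℝ) ^ (n-j) * ((n-j).factorial : ℝ)) = ((n-j).factorial : ℝ) := by
    rw [← mul_assoc, ← mul_pow]; norm_num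
  rw [mul_assoc, this]
  ring

/-- For every positive integer `m`, `ξ(m) = (1/m^m) · Σ_{j=0}^m m^j · m!/j!`. -/
theorem xi_closed_form (m : ℕ) (hm : 0 < m) :
    (∑ k ∈ Finset.range (m + 1),
      (m.choose k : ℝ) * ((k : ℝ) / m) ^ k * (1 - (k : ℝ) / m) ^ (m - k)) =
    (1 / (m : ℝ) ^ m) * ∑ j ∈ Finset.range (m + 1),
      (m : ℝ) ^ j * (m.factorial : ℝ) / (j.factorial : ℝ) := by
  have hm0 : (m : ℝ) ≠ 0 := Nat.cast_ne_zero.mpr hm.ne'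
  have hL : ∀ k ∈ range (m + 1),
      (m.choose k : ℝ) * ((k : ℝ) / m) ^ k * (1 - (k : ℝ) / m) ^ (m - k)
      = (1 / (m : ℝ) ^ m) * ((m.choose k : ℝ) * (k : ℝ) ^ k * ((m : ℝ) - k) ^ (m - k)) := by
    intro k hk
    have hk' : k ≤ m := by simp at hk; omega
    have h1 : (1 : ℝ) - (k : ℝ) / m = ((m : ℝ) - k) / m := by field_simp
    rw [h1, div_pow, div_pow]
    have h2 : (m : ℝ) ^ k * (m : ℝ) ^ (m - k) = (m : ℝ) ^ m := by
      rw [← pow_add]; congr 1; omega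
    rw [← h2]
    ring
  rw [Finset.sum_congr rfl hL, ← Finset.mul_sum, keyId]
  congr 1
  refine Finset.sum_congr rfl (fun j hj => ?_)
  have hj' : j ≤ m := by simp at hj; omega
  have hfac := Nat.choose_mul_factorial_mul_factorial hj'
  have hfacR : (m.choose j : ℝ) * (j.factorial : ℝ) * ((m - j).factorial : ℝ)
      = (m.factorial : ℝ) := by exact_mod_cast congrArg (Nat.cast (R := ℝ)) hfac
  have hj0 : (j.factorial : ℝ) ≠ 0 := Nat.cast_ne_zero.mpr j.factorial_ne_zero
  field_simp
  linear_combination hfacR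
end

section
/- For every positive integer m, ξ₂(m) = (1/m^m) · Σ_{j=0}^{m} m^{m−j} · C(m,j) · (j+1)!, where ξ₂(m) := Σ_{j=0}^{m} Σ_{k=0}^{m−j} C(m,j) C(m−j,k) (j/m)^j (k/m)^k (1 − j/m − k/m)^{m−j−k} (with the convention 0^0 = 1). -/
open Polynomial Finset

noncomputable def Dpoly (n p : ℕ) : Polynomial ℝ :=
  ∑ j ∈ range (n+1), C ((-1:ℝ)^(n+j) * (n.choose j)) * (X + C (j:ℝ))^p

lemma comp_shift_of_deriv_const (g : Polynomial ℝ) (c : ℝ) (h : derivative g = C c) :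
    g.comp (X + C 1) - g = C c := by
  have h2 : derivative (g - C c * X) = 0 := by
    rw [derivative_sub, h, derivative_mul, derivative_C, derivative_X]; ring
  have h3 : g - C c * X = C ((g - C c * X).coeff 0) :=
    eq_C_of_derivative_eq_zero h2
  have h4 : g = C c * X + C ((g - C c * X).coeff 0) := by
    rw [← h3]; ring
  rw [h4]
  simp [mul_comp, add_comp, X_comp, C_comp]
  ring

lemma Dpoly_deriv (n p : ℕ) :
    derivative (Dpoly n (p+1)) = C ((p:ℝ)+1) * Dpoly n p := by
  unfold Dpoly
  rw [derivative_sum, mul_sum]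
  refine sum_congr rfl fun j hj => ?_
  rw [derivative_mul, derivative_C, derivative_pow, derivative_add, derivative_X, derivative_C]
  push_cast
  ring

lemma Dpoly_succ (n p : ℕ) :
    Dpoly (n+1) p = (Dpoly n p).comp (X + C 1) - Dpoly n p := by
  unfold Dpoly
  rw [sum_range_succ' (fun j => C ((-1:ℝ)^(n+1+j) * ((n+1).choose j)) * (X + C (j:ℝ))^p)]
  have hsplit : ∀ i, C ((-1:ℝ)^(n+1+(i+1)) * ((n+1).choose (i+1))) * (X + C ((i+1:ℕ):ℝ))^p
      = C ((-1:ℝ)^(n+i) * (n.choose i)) * (X + C ((i:ℝ)+1))^p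
        + C ((-1:ℝ)^(n+1+(i+1)) * (n.choose (i+1))) * (X + C ((i+1:ℕ):ℝ))^p := by
    intro i
    have hsgn : (-1:ℝ)^(n+1+(i+1)) = (-1:ℝ)^(n+i) := by
      rw [show n+1+(i+1) = (n+i)+2 by ring, pow_add]; norm_num
    rw [Nat.choose_succ_succ n i, Nat.cast_add, mul_add, C_add, add_mul, hsgn]
    push_cast
    ring_nf
    rw [Nat.add_comm 1 i]
  rw [sum_congr rfl (fun i _ => hsplit i), sum_add_distrib]
  have h1 : ∑ i ∈ range (n+1), C ((-1:ℝ)^(n+i) * (n.choose i)) * (X + C ((i:ℝ)+1))^p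
      = (∑ j ∈ range (n+1), C ((-1:ℝ)^(n+j) * (n.choose j)) * (X + C (j:ℝ))^p).comp (X + C 1) := by
    rw [Polynomial.sum_comp]
    refine sum_congr rfl fun i hi => ?_
    simp only [mul_comp, add_comp, pow_comp, X_comp, C_comp, C_add, C_1]
    ring
  have h2 : (∑ i ∈ range (n+1), C ((-1:ℝ)^(n+1+(i+1)) * (n.choose (i+1))) * (X + C ((i+1:ℕ):ℝ))^p)
      + C ((-1:ℝ)^(n+1+0) * ((n+1).choose 0)) * (X + C ((0:ℕ):ℝ))^p
      = - ∑ j ∈ range (n+1), C ((-1:ℝ)^(n+j) * (n.choose j)) * (X + C (j:ℝ))^p := by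
    rw [sum_range_succ' (fun j => C ((-1:ℝ)^(n+j) * (n.choose j)) * (X + C (j:ℝ))^p) n,
      sum_range_succ (fun i => C ((-1:ℝ)^(n+1+(i+1)) * (n.choose (i+1))) * (X + C ((i+1:ℕ):ℝ))^p) n]
    have hlast : C ((-1:ℝ)^(n+1+(n+1)) * (n.choose (n+1))) * (X + C ((n+1:ℕ):ℝ))^p = 0 := by
      simp [Nat.choose_succ_self]
    rw [hlast, add_zero, neg_add, ← Finset.sum_neg_distrib]
    congr 1
    · refine sum_congr rfl fun i hi => ?_
      have hsgn : (-1:ℝ)^(n+1+(i+1)) = -(-1:ℝ)^(n+(i+1)) := by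
        rw [show n+1+(i+1) = (n+(i+1))+1 by ring, pow_succ]; ring
      rw [hsgn]; ring_nf
      rw [map_neg]; ring
    · have hsgn : (-1:ℝ)^(n+1+0) = -(-1:ℝ)^(n+0) := by
        rw [show n+1+0 = (n+0)+1 by ring, pow_succ]; ring
      simp only [hsgn, Nat.choose_zero_right, Nat.cast_one, Nat.cast_zero, mul_one, neg_mul,
        map_neg, add_zero, Nat.choose_zero_right]
  rw [add_assoc, h1, h2]
  ring

lemma Dpoly_main : ∀ n : ℕ, (∀ p, p < n → Dpoly n p = 0) ∧ Dpoly n n = C ((n.factorial : ℝ)) := by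
  intro n
  induction n with
  | zero =>
    refine ⟨fun p hp => absurd hp (Nat.not_lt_zero p), ?_⟩
    simp [Dpoly]
  | succ n ih =>
    have hlow : ∀ p, p < n + 1 → Dpoly (n+1) p = 0 := by
      intro p hp
      rw [Dpoly_succ]
      rcases Nat.lt_or_ge p n with h | h
      · rw [ih.1 p h]; simp
      · have hpn : p = n := by omega
        subst hpn
        rw [ih.2]; simp
    refine ⟨hlow, ?_⟩
    rw [Dpoly_succ]
    have hd : derivative (Dpoly n (n+1)) = C (((n+1).factorial : ℝ)) := by
      rw [Dpoly_deriv, ih.2, ← C_mul]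
      congr 1
      rw [Nat.factorial_succ]
      push_cast
      ring
    rw [comp_shift_of_deriv_const _ _ hd]

noncomputable def Ppoly (n : ℕ) : Polynomial ℝ :=
  ∑ j ∈ range (n+1), C ((n.choose j : ℝ) * (j:ℝ)^j) * (X + C ((n-j : ℕ):ℝ))^(n-j)

noncomputable def Qpoly (n : ℕ) : Polynomial ℝ :=
  ∑ j ∈ range (n+1), C ((n.choose j : ℝ) * (j.factorial:ℝ)) * (X + C (n:ℝ))^(n-j)

lemma Ppoly_deriv (n : ℕ) :
    derivative (Ppoly (n+1)) = C ((n:ℝ)+1) * (Ppoly n).comp (X + C 1) := by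
  unfold Ppoly
  rw [derivative_sum, sum_range_succ
    (fun j => derivative (C (((n+1).choose j : ℝ) * (j:ℝ)^j) * (X + C (((n+1)-j : ℕ):ℝ))^((n+1)-j)))]
  have hlast : derivative (C (((n+1).choose (n+1) : ℝ) * ((n+1:ℕ):ℝ)^(n+1)) *
      (X + C ((((n+1)-(n+1)) : ℕ):ℝ))^((n+1)-(n+1))) = 0 := by
    rw [Nat.sub_self, pow_zero, mul_one, derivative_C]
  rw [hlast, add_zero, Polynomial.sum_comp, mul_sum]
  refine sum_congr rfl fun j hj => ?_
  have hj' : j ≤ n := by simpa [Nat.lt_succ_iff] using hj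
  have he : (n+1) - j = (n-j) + 1 := by omega
  rw [derivative_mul, derivative_C, derivative_pow, derivative_add, derivative_X, derivative_C,
    he]
  simp only [mul_comp, add_comp, pow_comp, X_comp, C_comp, Nat.add_sub_cancel]
  have hbase : (C ((((n-j))+1 : ℕ):ℝ) : Polynomial ℝ) = C 1 + C ((n-j:ℕ):ℝ) := by
    rw [← C_add]; congr 1; push_cast; ring
  rw [hbase]
  have h2 : (n.choose j : ℝ) * ((n:ℝ)+1) = ((n+1).choose j : ℝ) * ((n+1-j : ℕ):ℝ) := by
    exact_mod_cast congrArg (Nat.cast : ℕ → ℝ) (Nat.choose_mul_succ_eq n j)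
  have hcoef : (((n+1).choose j : ℝ) * ((j:ℝ)^j)) * (1 + ((n-j:ℕ):ℝ))
      = ((n:ℝ)+1) * ((n.choose j : ℝ) * ((j:ℝ)^j)) := by
    rw [he] at h2
    push_cast at h2
    linear_combination (-(j:ℝ)^j) * h2
  have hcoefC : (C (((n+1).choose j : ℝ) * ((j:ℝ)^j)) : Polynomial ℝ) * (C 1 + C ((n-j:ℕ):ℝ))
      = C ((n:ℝ)+1) * C ((n.choose j : ℝ) * ((j:ℝ)^j)) := by
    rw [← C_add, ← C_mul, ← C_mul, hcoef]
  linear_combination ((X + (C 1 + C ((n-j:ℕ):ℝ)))^(n-j)) * hcoefC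

lemma Qpoly_deriv (n : ℕ) :
    derivative (Qpoly (n+1)) = C ((n:ℝ)+1) * (Qpoly n).comp (X + C 1) := by
  unfold Qpoly
  rw [derivative_sum, sum_range_succ
    (fun j => derivative (C (((n+1).choose j : ℝ) * ((j.factorial):ℝ)) * (X + C ((n+1:ℕ):ℝ))^((n+1)-j)))]
  have hlast : derivative (C (((n+1).choose (n+1) : ℝ) * (((n+1).factorial):ℝ)) *
      (X + C ((n+1:ℕ):ℝ))^((n+1)-(n+1))) = 0 := by
    rw [Nat.sub_self, pow_zero, mul_one, derivative_C]
  rw [hlast, add_zero, Polynomial.sum_comp, mul_sum]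
  refine sum_congr rfl fun j hj => ?_
  have hj' : j ≤ n := by simpa [Nat.lt_succ_iff] using hj
  have he : (n+1) - j = (n-j) + 1 := by omega
  rw [derivative_mul, derivative_C, derivative_pow, derivative_add, derivative_X, derivative_C,
    he]
  simp only [mul_comp, add_comp, pow_comp, X_comp, C_comp, Nat.add_sub_cancel]
  have hbase : (C ((n+1:ℕ):ℝ) : Polynomial ℝ) = C 1 + C ((n:ℕ):ℝ) := by
    rw [← C_add]; congr 1; push_cast; ring
  have hnum : (C ((((n-j))+1 : ℕ):ℝ) : Polynomial ℝ) = C (((n-j:ℕ):ℝ) + 1) := by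
    congr 1; push_cast; ring
  rw [hbase, hnum]
  have h2 : (n.choose j : ℝ) * ((n:ℝ)+1) = ((n+1).choose j : ℝ) * ((n+1-j : ℕ):ℝ) := by
    exact_mod_cast congrArg (Nat.cast : ℕ → ℝ) (Nat.choose_mul_succ_eq n j)
  have hcoefC : (C (((n+1).choose j : ℝ) * ((j.factorial):ℝ)) : Polynomial ℝ) * C (((n-j:ℕ):ℝ) + 1)
      = C ((n:ℝ)+1) * C ((n.choose j : ℝ) * ((j.factorial):ℝ)) := by
    rw [← C_mul, ← C_mul]
    congr 1
    rw [he] at h2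
    push_cast at h2
    linear_combination (-(j.factorial:ℝ)) * h2
  linear_combination ((X + (C 1 + C ((n:ℕ):ℝ)))^(n-j)) * hcoefC

lemma Ppoly_eval (N : ℕ) (hN : 0 < N) : (Ppoly N).eval (-(N:ℝ)) = (N.factorial : ℝ) := by
  have hDe : (Dpoly N N).eval 0 = (N.factorial : ℝ) := by rw [(Dpoly_main N).2]; simp
  rw [← hDe]
  unfold Ppoly Dpoly
  rw [eval_finset_sum, eval_finset_sum]
  refine sum_congr rfl fun j hj => ?_
  have hj' : j ≤ N := by simpa [Nat.lt_succ_iff] using hj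
  simp only [eval_mul, eval_pow, eval_add, eval_C, eval_X]
  have hb : (-(N:ℝ)) + ((N-j:ℕ):ℝ) = -(j:ℝ) := by
    have h : ((N-j:ℕ):ℝ) = (N:ℝ) - (j:ℝ) := by
      rw [Nat.cast_sub hj']
    rw [h]; ring
  rw [hb, zero_add]
  rcases Nat.eq_zero_or_pos j with hj0 | hjp
  · subst hj0
    simp [hN.ne', zero_pow]
  · have h1 : (-(j:ℝ))^(N-j) = (-1:ℝ)^(N-j) * (j:ℝ)^(N-j) := by rw [neg_pow]
    have h2 : (j:ℝ)^j * (j:ℝ)^(N-j) = (j:ℝ)^N := by rw [← pow_add]; congr 1; omega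
    have h3 : (-1:ℝ)^(N-j) = (-1:ℝ)^(N+j) := by
      rw [show N+j = (N-j) + 2*j by omega, pow_add, pow_mul]; norm_num
    calc (N.choose j : ℝ) * (j:ℝ)^j * (-(j:ℝ))^(N-j)
        = (-1:ℝ)^(N-j) * (N.choose j : ℝ) * ((j:ℝ)^j * (j:ℝ)^(N-j)) := by rw [h1]; ring
      _ = (-1:ℝ)^(N+j) * (N.choose j : ℝ) * (j:ℝ)^N := by rw [h2, h3]

lemma Qpoly_eval (N : ℕ) : (Qpoly N).eval (-(N:ℝ)) = (N.factorial : ℝ) := by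
  unfold Qpoly
  rw [eval_finset_sum]
  rw [Finset.sum_eq_single_of_mem N (self_mem_range_succ N)]
  · simp
  · intro j hj hne
    have hj' : j ≤ N := by simpa [Nat.lt_succ_iff] using hj
    simp only [eval_mul, eval_pow, eval_add, eval_C, eval_X]
    have : (-(N:ℝ)) + (N:ℝ) = 0 := by ring
    rw [this, zero_pow (by omega : N - j ≠ 0), mul_zero]

lemma PQ : ∀ n : ℕ, Ppoly n = Qpoly n := by
  intro n
  induction n with
  | zero => simp [Ppoly, Qpoly]
  | succ n ih =>
    have hder : derivative (Ppoly (n+1) - Qpoly (n+1)) = 0 := by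
      rw [derivative_sub, Ppoly_deriv, Qpoly_deriv, ih, sub_self]
    have hc := eq_C_of_derivative_eq_zero hder
    have heval : (Ppoly (n+1) - Qpoly (n+1)).eval (-(((n+1):ℕ):ℝ)) = 0 := by
      rw [eval_sub, Ppoly_eval (n+1) (Nat.succ_pos n), Qpoly_eval (n+1), sub_self]
    rw [hc, eval_C] at heval
    have := hc
    rw [heval, map_zero] at this
    exact sub_eq_zero.mp this

lemma abel_eval (n : ℕ) (y : ℝ) :
    ∑ j ∈ range (n+1), (n.choose j : ℝ) * (j:ℝ)^j * (y + ((n-j:ℕ):ℝ))^(n-j)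
    = ∑ j ∈ range (n+1), (n.choose j : ℝ) * (j.factorial:ℝ) * (y + (n:ℝ))^(n-j) := by
  have h := congrArg (eval y) (PQ n)
  unfold Ppoly Qpoly at h
  rw [eval_finset_sum, eval_finset_sum] at h
  simpa [eval_mul, eval_pow, eval_add, eval_C, eval_X] using h

lemma choose_swap {m j k : ℕ} (h : j + k ≤ m) :
    m.choose j * (m-j).choose k = m.choose k * (m-k).choose j := by
  have h1 := Nat.choose_mul (n := m) (k := j+k) (s := j) (Nat.le_add_right j k)
  have h2 := Nat.choose_mul (n := m) (k := j+k) (s := k) (Nat.le_add_left k j)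
  have h3 := Nat.choose_symm (Nat.le_add_left k j)
  rw [show j+k-k = j by omega] at h3
  rw [show (j+k) - j = k by omega] at h1
  rw [show (j+k) - k = j by omega] at h2
  rw [h3] at h1
  omega

lemma factorial_chain {m s k : ℕ} (hks : k ≤ s) (hsm : s ≤ m) :
    m.choose k * k.factorial * ((m-k).choose (s-k) * (s-k).factorial)
      = m.choose s * s.factorial := by
  apply Nat.eq_of_mul_eq_mul_right (Nat.factorial_pos (m - s))
  have e1 : (m-k).choose (s-k) * (s-k).factorial * (m-s).factorial = (m-k).factorial := by
    have := Nat.choose_mul_factorial_mul_factorial (show s - k ≤ m - k by omega)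
    rwa [show (m-k) - (s-k) = m - s by omega] at this
  have e2 := Nat.choose_mul_factorial_mul_factorial hsm
  have e3 := Nat.choose_mul_factorial_mul_factorial (show k ≤ m by omega)
  calc m.choose k * k.factorial * ((m-k).choose (s-k) * (s-k).factorial) * (m-s).factorial
      = m.choose k * k.factorial * ((m-k).choose (s-k) * (s-k).factorial * (m-s).factorial) := by
        ring
    _ = m.choose k * k.factorial * (m-k).factorial := by rw [e1]
    _ = m.factorial := e3
    _ = m.choose s * s.factorial * (m-s).factorial := e2.symm

lemma diag_regroup (M : ℕ) (g : ℕ → ℕ → ℝ) :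
    ∑ k ∈ range (M+1), ∑ j ∈ range (M-k+1), g k j
    = ∑ s ∈ range (M+1), ∑ k ∈ range (s+1), g k (s-k) := by
  rw [Finset.sum_sigma', Finset.sum_sigma']
  refine Finset.sum_nbij' (fun p => ⟨p.1 + p.2, p.1⟩) (fun q => ⟨q.2, q.1 - q.2⟩)
    ?_ ?_ ?_ ?_ ?_
  · rintro ⟨k, j⟩ hp
    simp only [mem_sigma, mem_range] at hp ⊢
    omega
  · rintro ⟨s, k⟩ hq
    simp only [mem_sigma, mem_range] at hq ⊢
    omega
  · rintro ⟨k, j⟩ hp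
    simp only [mem_sigma, mem_range] at hp
    show (⟨k, k + j - k⟩ : Σ _ : ℕ, ℕ) = ⟨k, j⟩
    rw [show k + j - k = j by omega]
  · rintro ⟨s, k⟩ hq
    simp only [mem_sigma, mem_range] at hq
    show (⟨k + (s - k), k⟩ : Σ _ : ℕ, ℕ) = ⟨s, k⟩
    rw [show k + (s - k) = s by omega]
  · rintro ⟨k, j⟩ hp
    simp only
    rw [show k + j - k = j by omega]

/-- For every positive integer `m`, `ξ₂(m) = (1/m^m) · Σ_{j=0}^m m^{m-j} · C(m,j) · (j+1)!`. -/
theorem xi2_closed_form (m : ℕ) (hm : 0 < m) :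
    (∑ j ∈ Finset.range (m + 1), ∑ k ∈ Finset.range (m - j + 1),
      (m.choose j : ℝ) * ((m - j).choose k : ℝ) * ((j : ℝ) / m) ^ j * ((k : ℝ) / m) ^ k *
        (1 - (j : ℝ) / m - (k : ℝ) / m) ^ (m - j - k)) =
    (1 / (m : ℝ) ^ m) * ∑ j ∈ Finset.range (m + 1),
      (m : ℝ) ^ (m - j) * (m.choose j : ℝ) * ((j + 1).factorial : ℝ) := by
  have hm0 : (m:ℝ) ≠ 0 := Nat.cast_ne_zero.mpr hm.ne'
  -- Step A : clear denominators
  have stepA : (∑ j ∈ Finset.range (m + 1), ∑ k ∈ Finset.range (m - j + 1),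
      (m.choose j : ℝ) * ((m - j).choose k : ℝ) * ((j : ℝ) / m) ^ j * ((k : ℝ) / m) ^ k *
        (1 - (j : ℝ) / m - (k : ℝ) / m) ^ (m - j - k))
      = (1/(m:ℝ)^m) * ∑ j ∈ range (m+1), ∑ k ∈ range (m-j+1),
        (m.choose j : ℝ) * ((m-j).choose k : ℝ) * (j:ℝ)^j * (k:ℝ)^k
          * ((m-j-k:ℕ):ℝ)^(m-j-k) := by
    rw [mul_sum]
    refine sum_congr rfl fun j hj => ?_
    rw [mul_sum]
    refine sum_congr rfl fun k hk => ?_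
    have hj' : j ≤ m := by simpa [Nat.lt_succ_iff] using hj
    have hk' : k ≤ m - j := by simpa [Nat.lt_succ_iff] using hk
    have h1 : (1:ℝ) - (j:ℝ)/m - (k:ℝ)/m = ((m-j-k:ℕ):ℝ)/m := by
      rw [Nat.cast_sub (by omega : k ≤ m - j), Nat.cast_sub (by omega : j ≤ m)]
      field_simp
    rw [h1, div_pow, div_pow, div_pow]
    have hmmm : (m:ℝ)^j * (m:ℝ)^k * (m:ℝ)^(m-j-k) = (m:ℝ)^m := by
      rw [← pow_add, ← pow_add]; congr 1; omega
    have hj0 : (m:ℝ)^j ≠ 0 := pow_ne_zero _ hm0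
    have hk0 : (m:ℝ)^k ≠ 0 := pow_ne_zero _ hm0
    have he0 : (m:ℝ)^(m-j-k) ≠ 0 := pow_ne_zero _ hm0
    calc (m.choose j : ℝ) * ((m-j).choose k : ℝ) * ((j:ℝ)^j/(m:ℝ)^j) * ((k:ℝ)^k/(m:ℝ)^k)
          * (((m-j-k:ℕ):ℝ)^(m-j-k)/(m:ℝ)^(m-j-k))
        = ((m.choose j : ℝ) * ((m-j).choose k : ℝ) * (j:ℝ)^j * (k:ℝ)^k
            * ((m-j-k:ℕ):ℝ)^(m-j-k)) * (1/((m:ℝ)^j * (m:ℝ)^k * (m:ℝ)^(m-j-k))) := by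
          field_simp
      _ = 1/(m:ℝ)^m * ((m.choose j : ℝ) * ((m-j).choose k : ℝ) * (j:ℝ)^j * (k:ℝ)^k
            * ((m-j-k:ℕ):ℝ)^(m-j-k)) := by rw [hmmm]; ring
  rw [stepA]
  congr 1
  -- Step B : inner Abel at y = 0
  have inner0 : ∀ n : ℕ, ∑ k ∈ range (n+1), (n.choose k : ℝ) * (k:ℝ)^k * ((n-k:ℕ):ℝ)^(n-k)
      = ∑ k ∈ range (n+1), (n.choose k : ℝ) * (k.factorial:ℝ) * (n:ℝ)^(n-k) := by
    intro n; simpa using abel_eval n 0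
  have stepB : ∑ j ∈ range (m+1), ∑ k ∈ range (m-j+1),
        (m.choose j : ℝ) * ((m-j).choose k : ℝ) * (j:ℝ)^j * (k:ℝ)^k * ((m-j-k:ℕ):ℝ)^(m-j-k)
      = ∑ j ∈ range (m+1), ∑ k ∈ range (m-j+1),
        ((m.choose j : ℝ) * (j:ℝ)^j) * (((m-j).choose k : ℝ) * (k.factorial:ℝ) * ((m-j:ℕ):ℝ)^(m-j-k)) := by
    refine sum_congr rfl fun j hj => ?_
    have e1 : ∑ k ∈ range (m-j+1),
        (m.choose j : ℝ) * ((m-j).choose k : ℝ) * (j:ℝ)^j * (k:ℝ)^k * ((m-j-k:ℕ):ℝ)^(m-j-k)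
        = ((m.choose j : ℝ) * (j:ℝ)^j) * ∑ k ∈ range (m-j+1),
          ((m-j).choose k : ℝ) * (k:ℝ)^k * ((m-j-k:ℕ):ℝ)^(m-j-k) := by
      rw [mul_sum]
      refine sum_congr rfl fun k hk => ?_
      ring
    rw [e1, inner0 (m-j), mul_sum]
  rw [stepB]
  -- Step C : swap the two sums
  have stepC : ∑ j ∈ range (m+1), ∑ k ∈ range (m-j+1),
        ((m.choose j : ℝ) * (j:ℝ)^j) * (((m-j).choose k : ℝ) * (k.factorial:ℝ) * ((m-j:ℕ):ℝ)^(m-j-k))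
      = ∑ k ∈ range (m+1), ∑ j ∈ range (m-k+1),
        ((m.choose j : ℝ) * (j:ℝ)^j) * (((m-j).choose k : ℝ) * (k.factorial:ℝ) * ((m-j:ℕ):ℝ)^(m-j-k)) := by
    exact Finset.sum_comm' (by intro j k; simp only [mem_range, Nat.lt_succ_iff]; omega)
  rw [stepC]
  -- Step D : outer Abel at y = k
  have stepD : ∀ k, k ∈ range (m+1) → ∑ j ∈ range (m-k+1),
        ((m.choose j : ℝ) * (j:ℝ)^j) * (((m-j).choose k : ℝ) * (k.factorial:ℝ) * ((m-j:ℕ):ℝ)^(m-j-k))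
      = ∑ j ∈ range (m-k+1),
        ((m.choose k : ℝ) * (k.factorial:ℝ)) * (((m-k).choose j : ℝ) * (j.factorial:ℝ) * (m:ℝ)^(m-k-j)) := by
    intro k hk
    have hk' : k ≤ m := by simpa [Nat.lt_succ_iff] using hk
    have e1 : ∑ j ∈ range (m-k+1),
        ((m.choose j : ℝ) * (j:ℝ)^j) * (((m-j).choose k : ℝ) * (k.factorial:ℝ) * ((m-j:ℕ):ℝ)^(m-j-k))
        = ((m.choose k : ℝ) * (k.factorial:ℝ)) * ∑ j ∈ range (m-k+1),
          ((m-k).choose j : ℝ) * (j:ℝ)^j * (((k:ℝ) + ((m-k-j:ℕ):ℝ))^(m-k-j)) := by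
      rw [mul_sum]
      refine sum_congr rfl fun j hj => ?_
      have hj' : j ≤ m - k := by simpa [Nat.lt_succ_iff] using hj
      have hcs : (m.choose j : ℝ) * ((m-j).choose k : ℝ) = (m.choose k : ℝ) * ((m-k).choose j : ℝ) := by
        exact_mod_cast congrArg (Nat.cast : ℕ → ℝ) (choose_swap (show j + k ≤ m by omega))
      have hbase : ((m-j:ℕ):ℝ) = (k:ℝ) + ((m-k-j:ℕ):ℝ) := by
        rw [Nat.cast_sub (by omega : j ≤ m), Nat.cast_sub (by omega : j ≤ m - k),
          Nat.cast_sub (by omega : k ≤ m)]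
        ring
      have hexp : m - j - k = m - k - j := by omega
      rw [hexp, hbase]
      linear_combination ((j:ℝ)^j * (k.factorial:ℝ) * ((k:ℝ) + ((m-k-j:ℕ):ℝ))^(m-k-j)) * hcs
    rw [e1, abel_eval (m-k) (k:ℝ), mul_sum]
    refine sum_congr rfl fun j hj => ?_
    have hy : (k:ℝ) + ((m-k:ℕ):ℝ) = (m:ℝ) := by
      rw [Nat.cast_sub hk']; ring
    rw [hy]
  rw [sum_congr rfl stepD]
  -- Step E : regroup along diagonals
  rw [diag_regroup m (fun k j => ((m.choose k : ℝ) * (k.factorial:ℝ))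
    * (((m-k).choose j : ℝ) * (j.factorial:ℝ) * (m:ℝ)^(m-k-j)))]
  refine sum_congr rfl fun s hs => ?_
  have hs' : s ≤ m := by simpa [Nat.lt_succ_iff] using hs
  have stepE : ∀ k, k ∈ range (s+1) →
      ((m.choose k : ℝ) * (k.factorial:ℝ))
        * (((m-k).choose (s-k) : ℝ) * ((s-k).factorial:ℝ) * (m:ℝ)^(m-k-(s-k)))
      = ((m.choose s : ℝ) * (s.factorial:ℝ)) * (m:ℝ)^(m-s) := by
    intro k hk
    have hk' : k ≤ s := by simpa [Nat.lt_succ_iff] using hk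
    have hexp : m - k - (s-k) = m - s := by omega
    have hcoef : (m.choose k : ℝ) * (k.factorial:ℝ) * (((m-k).choose (s-k) : ℝ) * ((s-k).factorial:ℝ))
        = (m.choose s : ℝ) * (s.factorial:ℝ) := by
      exact_mod_cast congrArg (Nat.cast : ℕ → ℝ) (factorial_chain hk' hs')
    rw [hexp]
    linear_combination ((m:ℝ)^(m-s)) * hcoef
  rw [sum_congr rfl stepE, sum_const, card_range]
  have : ((s+1).factorial : ℝ) = ((s:ℝ)+1) * (s.factorial:ℝ) := by
    rw [Nat.factorial_succ]; push_cast; ring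
  rw [this]
  ring
end

section
/- For every natural number m, Σ_{k=0}^{m} C(m,k) · k^k · (m−k)^{m−k} = Σ_{j=0}^{m} m^j · m!/j!, where the convention 0^0 = 1 is used. -/
open Finset Function Nat fwdDiff

lemma fwdDiff_int_pow (m : ℕ) :
    Δ_[(1:ℤ)] (fun x : ℤ => x ^ m) =
      ∑ j ∈ range m, (m.choose j : ℤ) • (fun x : ℤ => x ^ j) := by
  funext x
  rw [Finset.sum_apply]
  have h : (x + 1) ^ m = ∑ j ∈ range (m + 1), x ^ j * 1 ^ (m - j) * (m.choose j : ℤ) :=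
    add_pow x 1 m
  simp only [one_pow, mul_one] at h
  rw [Finset.sum_range_succ, Nat.choose_self, Nat.cast_one, mul_one] at h
  simp only [fwdDiff, h, add_sub_cancel_right]
  exact Finset.sum_congr rfl fun j _ => by simp [mul_comm]

lemma fd_iter_pow_zero : ∀ m n : ℕ, m < n →
    (Δ_[(1:ℤ)])^[n] (fun x : ℤ => x ^ m) = fun _ => 0 := by
  intro m
  induction m using Nat.strong_induction_on with
  | _ m ih =>
    intro n hn
    obtain ⟨n', rfl⟩ : ∃ n', n = n' + 1 := ⟨n - 1, by omega⟩
    rw [Function.iterate_succ_apply, fwdDiff_int_pow, fwdDiff_iter_finset_sum]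
    have : ∀ j ∈ range m, (Δ_[(1:ℤ)])^[n'] ((m.choose j : ℤ) • fun x : ℤ => x ^ j)
        = fun _ => 0 := by
      intro j hj
      have hjm := Finset.mem_range.mp hj
      rw [fwdDiff_iter_const_smul, ih j hjm n' (by omega)]
      funext x; simp
    rw [Finset.sum_congr rfl this]
    funext x; simp

lemma fd_iter_pow_self : ∀ n : ℕ,
    (Δ_[(1:ℤ)])^[n] (fun x : ℤ => x ^ n) = fun _ => (n.factorial : ℤ) := by
  intro n
  induction n with
  | zero => funext x; simp
  | succ n ih =>
    rw [Function.iterate_succ_apply, fwdDiff_int_pow, fwdDiff_iter_finset_sum,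
      Finset.sum_range_succ]
    have h0 : ∀ j ∈ range n, (Δ_[(1:ℤ)])^[n] (((n+1).choose j : ℤ) • fun x : ℤ => x ^ j)
        = fun _ => 0 := by
      intro j hj
      rw [fwdDiff_iter_const_smul, fd_iter_pow_zero j n (Finset.mem_range.mp hj)]
      funext x; simp
    rw [Finset.sum_congr rfl h0, fwdDiff_iter_const_smul, ih]
    funext x
    simp only [Pi.add_apply, Finset.sum_apply, Pi.smul_apply, Pi.zero_apply,
      Finset.sum_const_zero, zero_add, smul_eq_mul, Nat.factorial_succ]
    rw [Nat.choose_succ_self_right]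
    push_cast; ring

/-- The alternating sum identity `∑ (-1)^(n-k) C(n,k) k^n = n!`. -/
lemma alt_sum_pow (n : ℕ) :
    ∑ k ∈ range (n + 1), (-1 : ℤ) ^ (n - k) * (n.choose k) * (k : ℤ) ^ n
      = (n.factorial : ℤ) := by
  have h := fwdDiff_iter_eq_sum_shift (1 : ℤ) (fun x : ℤ => x ^ n) n 0
  rw [fd_iter_pow_self n] at h
  have h' : (n.factorial : ℤ) = ∑ k ∈ range (n + 1),
      ((-1 : ℤ) ^ (n - k) * (n.choose k)) • ((0 : ℤ) + k • (1:ℤ)) ^ n := h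
  rw [h']
  exact Finset.sum_congr rfl fun k _ => by
    simp [smul_eq_mul, mul_assoc]

open Polynomial

/-- `P n a = ∑ C(n,k) k^k (X + a + n - k)^(n-k)`. -/
noncomputable def Pp (n a : ℕ) : Polynomial ℤ :=
  ∑ k ∈ range (n+1), C ((n.choose k * k ^ k : ℕ) : ℤ) *
    (X + C ((a + (n - k) : ℕ) : ℤ)) ^ (n - k)

/-- `Q n a = ∑ (n)_k (X + a + n)^(n-k)`. -/
noncomputable def Qp (n a : ℕ) : Polynomial ℤ :=
  ∑ k ∈ range (n+1), C ((n.descFactorial k : ℕ) : ℤ) *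
    (X + C ((a + n : ℕ) : ℤ)) ^ (n - k)

lemma derivP (n a : ℕ) :
    derivative (Pp (n+1) a) = C (((n+1 : ℕ) : ℤ)) * Pp n (a+1) := by
  unfold Pp
  rw [derivative_sum, Finset.sum_range_succ, Finset.mul_sum]
  have hlast : derivative (C ((((n+1).choose (n+1)) * (n+1) ^ (n+1) : ℕ) : ℤ) *
      (X + C ((a + ((n+1) - (n+1)) : ℕ) : ℤ)) ^ ((n+1) - (n+1))) = 0 := by
    rw [Nat.sub_self, pow_zero, mul_one, derivative_C]
  rw [hlast, add_zero]
  refine Finset.sum_congr rfl fun k hk => ?_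
  have hk' : k ≤ n := Nat.lt_succ_iff.mp (Finset.mem_range.mp hk)
  rw [derivative_C_mul, derivative_pow, derivative_X_add_C, mul_one]
  have hexp : (n + 1 - k) - 1 = n - k := by omega
  have hbase : (a + ((n+1) - k)) = ((a+1) + (n - k)) := by omega
  have hc : ((n+1).choose k * k ^ k) * (n + 1 - k) = (n+1) * (n.choose k * k ^ k) := by
    have h := Nat.choose_mul_succ_eq n k
    calc ((n+1).choose k * k ^ k) * (n + 1 - k)
        = ((n+1).choose k * (n + 1 - k)) * k ^ k := by ring
      _ = (n.choose k * (n+1)) * k ^ k := by rw [← h]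
      _ = (n+1) * (n.choose k * k ^ k) := by ring
  have hcz : (((n+1).choose k * k ^ k : ℕ) : ℤ) * (((n+1) - k : ℕ) : ℤ)
      = (((n+1) : ℕ) : ℤ) * ((n.choose k * k ^ k : ℕ) : ℤ) := by exact_mod_cast hc
  rw [hexp, hbase, ← mul_assoc, ← mul_assoc, ← C_mul, ← C_mul, hcz]

lemma derivQ (n a : ℕ) :
    derivative (Qp (n+1) a) = C (((n+1 : ℕ) : ℤ)) * Qp n (a+1) := by
  unfold Qp
  rw [derivative_sum, Finset.sum_range_succ, Finset.mul_sum]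
  have hlast : derivative (C (((n+1).descFactorial (n+1) : ℕ) : ℤ) *
      (X + C ((a + (n+1) : ℕ) : ℤ)) ^ ((n+1) - (n+1))) = 0 := by
    rw [Nat.sub_self, pow_zero, mul_one, derivative_C]
  rw [hlast, add_zero]
  refine Finset.sum_congr rfl fun k hk => ?_
  have hk' : k ≤ n := Nat.lt_succ_iff.mp (Finset.mem_range.mp hk)
  rw [derivative_C_mul, derivative_pow, derivative_X_add_C, mul_one]
  have hexp : (n + 1 - k) - 1 = n - k := by omega
  have hbase : (a + (n+1)) = ((a+1) + n) := by omega
  have hc : (n+1).descFactorial k * (n + 1 - k) = (n+1) * n.descFactorial k := by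
    rw [mul_comm ((n+1).descFactorial k), ← Nat.descFactorial_succ,
      Nat.succ_descFactorial_succ]
  have hcz : (((n+1).descFactorial k : ℕ) : ℤ) * (((n+1) - k : ℕ) : ℤ)
      = (((n+1) : ℕ) : ℤ) * ((n.descFactorial k : ℕ) : ℤ) := by exact_mod_cast hc
  rw [hexp, hbase, ← mul_assoc, ← mul_assoc, ← C_mul, ← C_mul, hcz]

lemma evalP (n a : ℕ) :
    (Pp (n+1) a).eval (-((a + n + 1 : ℕ) : ℤ)) = (((n+1).factorial : ℕ) : ℤ) := by
  unfold Pp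
  rw [eval_finset_sum]
  have hterm : ∀ k ∈ range (n+2),
      (C (((n+1).choose k * k ^ k : ℕ) : ℤ) *
        (X + C ((a + ((n+1) - k) : ℕ) : ℤ)) ^ ((n+1) - k)).eval (-((a + n + 1 : ℕ) : ℤ))
      = (-1 : ℤ) ^ ((n+1) - k) * ((n+1).choose k) * (k : ℤ) ^ (n+1) := by
    intro k hk
    have hk' : k ≤ n + 1 := Nat.lt_succ_iff.mp (Finset.mem_range.mp hk)
    have hbase : (-((a + n + 1 : ℕ) : ℤ) + ((a + ((n+1) - k) : ℕ) : ℤ)) = -(k : ℤ) := by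
      push_cast [Nat.sub_le_iff_le_add]
      omega
    rw [eval_mul, eval_pow, eval_add, eval_X, eval_C, eval_C, hbase, neg_pow]
    have hpow : (k : ℤ) ^ k * (k : ℤ) ^ ((n+1) - k) = (k : ℤ) ^ (n+1) := by
      rw [← pow_add]
      congr 1
      omega
    push_cast
    calc ((n+1).choose k : ℤ) * (k : ℤ) ^ k * ((-1) ^ ((n+1) - k) * (k:ℤ) ^ ((n+1) - k))
        = (-1 : ℤ) ^ ((n+1) - k) * ((n+1).choose k) * ((k : ℤ) ^ k * (k:ℤ) ^ ((n+1) - k)) := by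
          ring
      _ = _ := by rw [hpow]
  rw [Finset.sum_congr rfl hterm]
  exact alt_sum_pow (n+1)

lemma evalQ (n a : ℕ) :
    (Qp (n+1) a).eval (-((a + n + 1 : ℕ) : ℤ)) = (((n+1).factorial : ℕ) : ℤ) := by
  unfold Qp
  rw [eval_finset_sum, Finset.sum_range_succ]
  have h0 : ∀ k ∈ range (n+1),
      (C (((n+1).descFactorial k : ℕ) : ℤ) *
        (X + C ((a + (n+1) : ℕ) : ℤ)) ^ ((n+1) - k)).eval (-((a + n + 1 : ℕ) : ℤ)) = 0 := by
    intro k hk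
    have hk' : k < n + 1 := Finset.mem_range.mp hk
    rw [eval_mul, eval_pow, eval_add, eval_X, eval_C, eval_C]
    have hbase : (-((a + n + 1 : ℕ) : ℤ) + ((a + (n+1) : ℕ) : ℤ)) = 0 := by
      push_cast; ring
    rw [hbase, zero_pow (by omega), mul_zero]
  rw [Finset.sum_congr rfl h0, Finset.sum_const_zero, zero_add,
    Nat.sub_self, pow_zero, mul_one, eval_C, Nat.descFactorial_self]

lemma PQ_s3 : ∀ n a : ℕ, Pp n a = Qp n a := by
  intro n
  induction n with
  | zero => intro a; simp [Pp, Qp]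
  | succ n ih =>
    intro a
    have hder : derivative (Pp (n+1) a - Qp (n+1) a) = 0 := by
      rw [derivative_sub, derivP, derivQ, ih (a+1), sub_self]
    have hc := eq_C_of_derivative_eq_zero hder
    have he : (Pp (n+1) a - Qp (n+1) a).eval (-((a + n + 1 : ℕ) : ℤ)) = 0 := by
      rw [eval_sub, evalP, evalQ, sub_self]
    rw [hc, eval_C] at he
    have : Pp (n+1) a - Qp (n+1) a = 0 := by rw [hc, he, map_zero]
    exact sub_eq_zero.mp this

/-- For every natural number `m`,
`Σ_{k=0}^m C(m,k) k^k (m-k)^{m-k} = Σ_{j=0}^m m^j · m!/j!`. -/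
theorem alpha_closed_form (m : ℕ) :
    (∑ k ∈ Finset.range (m + 1), m.choose k * k ^ k * (m - k) ^ (m - k)) =
    ∑ j ∈ Finset.range (m + 1), m ^ j * (m.factorial / j.factorial) := by
  have key := congrArg (Polynomial.eval (0 : ℤ)) (PQ_s3 m 0)
  have hL : (Pp m 0).eval 0
      = ((∑ k ∈ Finset.range (m + 1), m.choose k * k ^ k * (m - k) ^ (m - k) : ℕ) : ℤ) := by
    unfold Pp
    rw [eval_finset_sum]
    push_cast
    refine Finset.sum_congr rfl fun k hk => ?_
    rw [eval_mul, eval_pow, eval_add, eval_X, eval_C, eval_C]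
    ring
  have hnat : ∑ j ∈ Finset.range (m + 1), m ^ j * (m.factorial / j.factorial)
      = ∑ k ∈ Finset.range (m + 1), m.descFactorial k * m ^ (m - k) := by
    rw [← Finset.sum_range_reflect]
    refine Finset.sum_congr rfl fun k hk => ?_
    have hk' : k ≤ m := Nat.lt_succ_iff.mp (Finset.mem_range.mp hk)
    have h1 : m + 1 - 1 - k = m - k := by omega
    rw [h1, Nat.descFactorial_eq_div hk', mul_comm]
  have hR : (Qp m 0).eval 0
      = ((∑ j ∈ Finset.range (m + 1), m ^ j * (m.factorial / j.factorial) : ℕ) : ℤ) := by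
    unfold Qp
    rw [eval_finset_sum, hnat]
    push_cast
    refine Finset.sum_congr rfl fun k hk => ?_
    rw [eval_mul, eval_pow, eval_add, eval_X, eval_C, eval_C]
    ring
  rw [hL, hR] at key
  exact_mod_cast key
end

section
/- For every natural number m, Σ_{j=0}^{m} m^{m−j} · C(m,j) · (j+1)! − Σ_{j=0}^{m} m^j · m!/j! = m^{m+1}. -/
private lemma tele (m : ℕ) : ∀ k, k ≤ m →
    ∑ j ∈ Finset.range (k + 1), m ^ j * m.choose j * ((m - j) * (m - j).factorial)
      = m ^ (k + 1) * m.choose k * (m - k).factorial := by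
  intro k
  induction k with
  | zero => intro _; simp [Nat.factorial]
  | succ k ih =>
    intro hk
    have hk' : k ≤ m := by omega
    rw [Finset.sum_range_succ, ih hk']
    have hd : m - k = (m - (k + 1)) + 1 := by omega
    set d := m - (k + 1) with hdef
    rw [hd]
    have hcs := Nat.choose_succ_right_eq m k
    rw [hd] at hcs
    have key : m.choose k * (d + 1) + m.choose (k + 1) * d = m * m.choose (k + 1) := by
      have hm : m = (k + 1) + d := by omega
      have hsplit : m * m.choose (k + 1)
          = (k + 1) * m.choose (k + 1) + d * m.choose (k + 1) := by
        rw [← add_mul, ← hm]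
      nlinarith [hcs, hsplit]
    calc m ^ (k + 1) * m.choose k * (d + 1).factorial
          + m ^ (k + 1) * m.choose (k + 1) * (d * d.factorial)
        = m ^ (k + 1) * ((m.choose k * (d + 1) + m.choose (k + 1) * d) * d.factorial) := by
          rw [Nat.factorial_succ]; ring
      _ = m ^ (k + 1 + 1) * m.choose (k + 1) * d.factorial := by
          rw [key]; ring

/-- For every natural number `m`,
`Σ_{j=0}^m m^{m-j} C(m,j) (j+1)! - Σ_{j=0}^m m^j · m!/j! = m^{m+1}`. -/
theorem closed_forms_difference (m : ℕ) :
    (∑ j ∈ Finset.range (m + 1), m ^ (m - j) * m.choose j * (j + 1).factorial) -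
    (∑ j ∈ Finset.range (m + 1), m ^ j * (m.factorial / j.factorial)) =
    m ^ (m + 1) := by
  have hA : (∑ j ∈ Finset.range (m + 1), m ^ (m - j) * m.choose j * (j + 1).factorial)
      = ∑ j ∈ Finset.range (m + 1),
          (m ^ j * m.choose j * ((m - j) * (m - j).factorial)
            + m ^ j * (m.factorial / j.factorial)) := by
    rw [← Finset.sum_range_reflect]
    apply Finset.sum_congr rfl
    intro j hj
    have hj' : j ≤ m := by simpa using Nat.lt_succ_iff.mp (Finset.mem_range.mp hj)
    have h1 : m + 1 - 1 - j = m - j := by omega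
    have h2 : m - (m - j) = j := Nat.sub_sub_self hj'
    have h3 : m.choose (m - j) = m.choose j := Nat.choose_symm hj'
    have h4 : m.factorial / j.factorial = m.choose j * (m - j).factorial := by
      have := Nat.choose_mul_factorial_mul_factorial hj'
      rw [Nat.div_eq_of_eq_mul_left (Nat.factorial_pos j)]
      rw [← this]; ring
    rw [h1, h2, h3, h4, show m - j + 1 = (m - j) + 1 from rfl, Nat.factorial_succ]
    ring
  have hT := tele m m (le_refl m)
  rw [Finset.sum_add_distrib, hT] at hA
  rw [Nat.choose_self, Nat.sub_self, Nat.factorial_zero, mul_one, mul_one] at hA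
  omega
end

section
/- (Cauchy's binomial identity, case p = q = 0 of Abel-type sums) For every natural number m and all real numbers x, y: Σ_{k=0}^{m} C(m,k) · (x+k)^k · (y+m−k)^{m−k} = Σ_{k=0}^{m} C(m,k) · k! · (x+y+m)^{m−k}. -/
open Finset

/-- The `n`-th finite difference of `(x+·)^i` for `i ≤ n`. -/
lemma finite_diff (n : ℕ) : ∀ i ≤ n, ∀ x : ℝ,
    (∑ k ∈ Finset.range (n + 1), (-1 : ℝ) ^ (n - k) * (n.choose k : ℝ) * (x + k) ^ i) =
      if i = n then (n.factorial : ℝ) else 0 := by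
  induction n with
  | zero =>
    intro i hi x
    interval_cases i
    simp
  | succ n ih =>
    intro i hi x
    have key : (∑ k ∈ Finset.range (n + 2),
          (-1 : ℝ) ^ (n + 1 - k) * ((n + 1).choose k : ℝ) * (x + k) ^ i)
        = ∑ k ∈ Finset.range (n + 1),
          (-1 : ℝ) ^ (n - k) * (n.choose k : ℝ) * ((x + 1 + k) ^ i - (x + k) ^ i) := by
      rw [Finset.sum_range_succ']
      simp only [Nat.choose_succ_succ, mul_sub]
      rw [Finset.sum_sub_distrib]
      have h1 : ∀ k ∈ Finset.range (n + 1),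
          (-1 : ℝ) ^ (n + 1 - (k + 1)) * (((n).choose k + (n).choose (k + 1) : ℕ) : ℝ)
            * (x + ↑(k + 1)) ^ i
          = (-1 : ℝ) ^ (n - k) * (n.choose k : ℝ) * (x + 1 + k) ^ i
            + (-1 : ℝ) ^ (n - k) * (n.choose (k + 1) : ℝ) * (x + 1 + k) ^ i := by
        intro k hk
        have : (n + 1 - (k + 1)) = n - k := by omega
        rw [this]
        push_cast
        ring
      rw [Finset.sum_congr rfl h1, Finset.sum_add_distrib]
      have h2 : (∑ k ∈ Finset.range (n + 1),
            (-1 : ℝ) ^ (n - k) * (n.choose (k + 1) : ℝ) * (x + 1 + k) ^ i)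
            + (-1 : ℝ) ^ (n + 1 - 0) * ((n + 1).choose 0 : ℝ) * (x + (0 : ℕ)) ^ i
          = -(∑ k ∈ Finset.range (n + 1), (-1 : ℝ) ^ (n - k) * (n.choose k : ℝ) * (x + k) ^ i)
          := by
        rw [Finset.sum_range_succ'  (fun k => (-1 : ℝ) ^ (n - k) * (n.choose k : ℝ) * (x + k) ^ i),
          neg_add, ← Finset.sum_neg_distrib]
        congr 1
        · rw [Finset.sum_range_succ]
          simp only [Nat.choose_succ_self, Nat.cast_zero, mul_zero, zero_mul, add_zero]
          apply Finset.sum_congr rfl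
          intro k hk
          have hkn : k < n := Finset.mem_range.mp hk
          have : n - k = (n - (k + 1)) + 1 := by omega
          rw [this]
          push_cast
          ring
        · have : n + 1 - 0 = (n - 0) + 1 := by omega
          rw [this]
          simp [Nat.choose_zero_right]
          ring
      rw [add_assoc, h2]
      ring
    rw [key]
    rcases Nat.eq_zero_or_pos i with hi0 | hip
    · subst hi0
      simp only [pow_zero, sub_self, mul_zero, Finset.sum_const_zero]
      have : ¬ (0 = n + 1) := by omega
      rw [if_neg this]
    · obtain ⟨t, rfl⟩ : ∃ t, i = t + 1 := ⟨i - 1, by omega⟩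
      have ht : t ≤ n := by omega
      have hexp : ∀ k : ℕ, (x + 1 + (k : ℝ)) ^ (t + 1) - (x + k) ^ (t + 1)
          = ∑ j ∈ Finset.range (t + 1), ((t + 1).choose j : ℝ) * (x + k) ^ j := by
        intro k
        have hb : (x + 1 + (k : ℝ)) = (x + k) + 1 := by ring
        rw [hb, add_pow]
        rw [Finset.sum_range_succ]
        simp only [one_pow, Nat.choose_self, Nat.cast_one, mul_one, Nat.sub_self, pow_zero]
        rw [add_sub_cancel_right]
        apply Finset.sum_congr rfl
        intro j hj
        ring
      calc (∑ k ∈ Finset.range (n + 1), (-1 : ℝ) ^ (n - k) * (n.choose k : ℝ)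
              * ((x + 1 + k) ^ (t + 1) - (x + k) ^ (t + 1)))
          = ∑ k ∈ Finset.range (n + 1), ∑ j ∈ Finset.range (t + 1),
              ((t + 1).choose j : ℝ) * ((-1 : ℝ) ^ (n - k) * (n.choose k : ℝ) * (x + k) ^ j) := by
            apply Finset.sum_congr rfl
            intro k hk
            rw [hexp k, Finset.mul_sum]
            apply Finset.sum_congr rfl
            intro j hj
            ring
        _ = ∑ j ∈ Finset.range (t + 1), ((t + 1).choose j : ℝ)
              * ∑ k ∈ Finset.range (n + 1),
                  (-1 : ℝ) ^ (n - k) * (n.choose k : ℝ) * (x + k) ^ j := by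
            rw [Finset.sum_comm]
            apply Finset.sum_congr rfl
            intro j hj
            rw [Finset.mul_sum]
        _ = ∑ j ∈ Finset.range (t + 1), ((t + 1).choose j : ℝ)
              * (if j = n then (n.factorial : ℝ) else 0) := by
            apply Finset.sum_congr rfl
            intro j hj
            have hjt := Finset.mem_range.mp hj
            rw [ih j (by omega) x]
        _ = if t + 1 = n + 1 then ((n + 1).factorial : ℝ) else 0 := by
            rcases eq_or_lt_of_le ht with hteq | htlt
            · subst hteq
              rw [if_pos rfl]
              rw [Finset.sum_range_succ]
              have hz : ∀ j ∈ Finset.range t, ((t + 1).choose j : ℝ)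
                  * (if j = t then (t.factorial : ℝ) else 0) = 0 := by
                intro j hj
                have hjt := Finset.mem_range.mp hj
                rw [if_neg (by omega : ¬ j = t), mul_zero]
              rw [Finset.sum_congr rfl hz, Finset.sum_const_zero, zero_add, if_pos rfl]
              rw [Nat.choose_succ_self_right, Nat.factorial_succ]
              push_cast
              ring
            · rw [if_neg (by omega : ¬ t + 1 = n + 1)]
              apply Finset.sum_eq_zero
              intro j hj
              have : ¬ j = n := by
                have := Finset.mem_range.mp hj
                omega
              rw [if_neg this, mul_zero]

/-- Cauchy's binomial identity (the case `p = q = 0` of Abel-type sums):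
for every natural number `m` and all real `x, y`,
`Σ_{k=0}^m C(m,k) (x+k)^k (y+m-k)^{m-k} = Σ_{k=0}^m C(m,k) k! (x+y+m)^{m-k}`. -/
theorem cauchy_binomial_identity (m : ℕ) (x y : ℝ) :
    (∑ k ∈ Finset.range (m + 1),
      (m.choose k : ℝ) * (x + k) ^ k * (y + (m - k : ℕ)) ^ (m - k)) =
    ∑ k ∈ Finset.range (m + 1),
      (m.choose k : ℝ) * (k.factorial : ℝ) * (x + y + m) ^ (m - k) := by
  set s : ℝ := x + y + m with hs
  have step1 : (∑ k ∈ Finset.range (m + 1),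
      (m.choose k : ℝ) * (x + k) ^ k * (y + (m - k : ℕ)) ^ (m - k))
      = ∑ k ∈ Finset.range (m + 1), ∑ j ∈ Finset.range (m - k + 1),
          (m.choose k : ℝ) * ((m - k).choose j : ℝ) * (-1 : ℝ) ^ (j + (m - k))
            * s ^ j * (x + k) ^ (k + (m - k - j)) := by
    apply Finset.sum_congr rfl
    intro k hk
    have hkm : k ≤ m := by
      have := Finset.mem_range.mp hk
      omega
    have hy : (y + ((m - k : ℕ) : ℝ)) = s - (x + k) := by
      rw [hs, Nat.cast_sub hkm]
      ring
    rw [hy, sub_pow, Finset.mul_sum]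
    apply Finset.sum_congr rfl
    intro j hj
    have hjm : j ≤ m - k := by
      have := Finset.mem_range.mp hj
      omega
    rw [pow_add (x + (k:ℝ)) k (m - k - j)]
    ring
  rw [step1]
  rw [Finset.sum_sigma' (Finset.range (m + 1)) (fun k => Finset.range (m - k + 1))
    (fun k j => (m.choose k : ℝ) * ((m - k).choose j : ℝ) * (-1 : ℝ) ^ (j + (m - k))
      * s ^ j * (x + k) ^ (k + (m - k - j)))]
  have step2 : (∑ p ∈ (Finset.range (m + 1)).sigma (fun k => Finset.range (m - k + 1)),
      (m.choose p.1 : ℝ) * ((m - p.1).choose p.2 : ℝ) * (-1 : ℝ) ^ (p.2 + (m - p.1))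
        * s ^ p.2 * (x + p.1) ^ (p.1 + (m - p.1 - p.2)))
      = ∑ p ∈ (Finset.range (m + 1)).sigma (fun n => Finset.range (n + 1)),
          (m.choose p.2 : ℝ) * ((m - p.2).choose (p.1 - p.2) : ℝ) * (-1 : ℝ) ^ (p.1 - p.2)
            * s ^ (m - p.1) * (x + p.2) ^ p.1 := by
    apply Finset.sum_nbij' (fun p => ⟨m - p.2, p.1⟩) (fun p => ⟨p.2, m - p.1⟩)
    · rintro ⟨k, j⟩ hp
      simp only [Finset.mem_sigma, Finset.mem_range] at hp ⊢
      omega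
    · rintro ⟨n, k⟩ hp
      simp only [Finset.mem_sigma, Finset.mem_range] at hp ⊢
      omega
    · rintro ⟨k, j⟩ hp
      simp only [Finset.mem_sigma, Finset.mem_range] at hp
      simp only [Sigma.mk.inj_iff, heq_eq_eq]
      exact ⟨trivial, by omega⟩
    · rintro ⟨n, k⟩ hp
      simp only [Finset.mem_sigma, Finset.mem_range] at hp
      simp only [Sigma.mk.inj_iff, heq_eq_eq]
      exact ⟨by omega, trivial⟩
    · rintro ⟨k, j⟩ hp
      simp only [Finset.mem_sigma, Finset.mem_range] at hp
      obtain ⟨hk, hj⟩ := hp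
      have h1 : m - (m - j) = j := by omega
      have h2 : (m - j) - k = (m - k) - j := by omega
      have h3 : k + (m - k - j) = m - j := by omega
      have h4 : (-1 : ℝ) ^ (j + (m - k)) = (-1 : ℝ) ^ ((m - j) - k) := by
        have : j + (m - k) = ((m - j) - k) + 2 * j := by omega
        rw [this, pow_add, pow_mul]
        norm_num
      have h5 : (m - k).choose (m - k - j) = (m - k).choose j :=
        Nat.choose_symm (by omega)
      simp only [h1, h2, h3, h4, h5]
  rw [step2, Finset.sum_sigma]
  apply Finset.sum_congr rfl
  intro n hn
  have hnm : n ≤ m := by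
    have := Finset.mem_range.mp hn
    omega
  have inner : (∑ k ∈ Finset.range (n + 1),
      (m.choose k : ℝ) * ((m - k).choose (n - k) : ℝ) * (-1 : ℝ) ^ (n - k)
        * s ^ (m - n) * (x + k) ^ n)
      = (m.choose n : ℝ) * s ^ (m - n)
        * ∑ k ∈ Finset.range (n + 1), (-1 : ℝ) ^ (n - k) * (n.choose k : ℝ) * (x + k) ^ n := by
    rw [Finset.mul_sum]
    apply Finset.sum_congr rfl
    intro k hk
    have hkn : k ≤ n := by
      have := Finset.mem_range.mp hk
      omega
    have hch : (m.choose k : ℝ) * ((m - k).choose (n - k) : ℝ)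
        = (m.choose n : ℝ) * (n.choose k : ℝ) := by
      rw [← Nat.cast_mul, ← Nat.cast_mul, Nat.choose_mul (n := m) hkn]
    rw [hch]
    ring
  rw [inner, finite_diff n n le_rfl x, if_pos rfl]
  ring
end

section
/- (Hurwitz's multinomial identity, case of vanishing exponent shifts, for n = 3) For every natural number m and all real numbers x₁, x₂, x₃: Σ_{k₁+k₂+k₃=m} m!/(k₁!·k₂!·k₃!) · (x₁+k₁)^{k₁} · (x₂+k₂)^{k₂} · (x₃+k₃)^{k₃} = Σ_{k=0}^{m} C(m,k) · (x₁+x₂+x₃+m)^{m−k} · (k+1)!, where the outer sum on the left is over all triples of natural numbers (k₁,k₂,k₃) with k₁+k₂+k₃ = m. -/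
open Finset

lemma hw_diff_rec (t : ℕ) (f : ℕ → ℝ) :
    ∑ k ∈ Finset.range (t + 2), (-1 : ℝ) ^ k * ((t + 1).choose k) * f k
      = ∑ k ∈ Finset.range (t + 1), (-1 : ℝ) ^ k * (t.choose k) * (f k - f (k + 1)) := by
  have hC : ∑ k ∈ Finset.range (t + 1), (-1 : ℝ) ^ k * (t.choose (k + 1)) * f (k + 1)
      = ∑ k ∈ Finset.range t, (-1 : ℝ) ^ k * (t.choose (k + 1)) * f (k + 1) := by
    rw [Finset.sum_range_succ, Nat.choose_succ_self]
    simp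
  have hA : ∑ k ∈ Finset.range (t + 1), (-1 : ℝ) ^ k * (t.choose k) * f k
      = (∑ k ∈ Finset.range t, (-1 : ℝ) ^ (k + 1) * (t.choose (k + 1)) * f (k + 1)) + f 0 := by
    rw [Finset.sum_range_succ' (fun k => (-1 : ℝ) ^ k * (t.choose k) * f k) t]
    simp
  have hL : ∑ k ∈ Finset.range (t + 2), (-1 : ℝ) ^ k * ((t + 1).choose k) * f k
      = (∑ k ∈ Finset.range (t + 1), (-1 : ℝ) ^ (k + 1) * ((t + 1).choose (k + 1)) * f (k + 1))
        + f 0 := by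
    rw [Finset.sum_range_succ' (fun k => (-1 : ℝ) ^ k * ((t + 1).choose k) * f k) (t + 1)]
    simp
  rw [hL]
  have expand : ∀ k : ℕ, (-1 : ℝ) ^ (k + 1) * ((t + 1).choose (k + 1)) * f (k + 1)
      = -((-1 : ℝ) ^ k * (t.choose k) * f (k + 1))
        - (-1 : ℝ) ^ k * (t.choose (k + 1)) * f (k + 1) := by
    intro k
    rw [Nat.choose_succ_succ]
    push_cast
    ring
  have rhs : ∑ k ∈ Finset.range (t + 1), (-1 : ℝ) ^ k * (t.choose k) * (f k - f (k + 1))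
      = (∑ k ∈ Finset.range (t + 1), (-1 : ℝ) ^ k * (t.choose k) * f k)
        - ∑ k ∈ Finset.range (t + 1), (-1 : ℝ) ^ k * (t.choose k) * f (k + 1) := by
    rw [← Finset.sum_sub_distrib]
    congr 1 with k
    ring
  have this' : ∀ k : ℕ, (-1 : ℝ) ^ (k + 1) * (t.choose (k + 1)) * f (k + 1)
      = -((-1 : ℝ) ^ k * (t.choose (k + 1)) * f (k + 1)) := by intro k; ring
  rw [Finset.sum_congr rfl fun k _ => expand k, Finset.sum_sub_distrib, Finset.sum_neg_distrib,
    hC, rhs, hA, Finset.sum_congr rfl fun k (_ : k ∈ Finset.range t) => this' k,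
    Finset.sum_neg_distrib]
  ring

lemma hw_diff_pow (t : ℕ) : ∀ (j : ℕ) (x : ℝ), j ≤ t →
    ∑ k ∈ Finset.range (t + 1), (-1 : ℝ) ^ k * (t.choose k) * (x + k) ^ j
      = if j = t then (-1 : ℝ) ^ t * t.factorial else 0 := by
  induction t with
  | zero =>
    intro j x hj
    interval_cases j
    simp
  | succ t ih =>
    intro j x hj
    have step := hw_diff_rec t (fun k => (x + k) ^ j)
    rw [show t + 1 + 1 = t + 2 from rfl, step]
    have hdiff : ∀ k : ℕ, ((x + (k : ℝ)) ^ j - (x + ((k + 1 : ℕ) : ℝ)) ^ j)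
        = -∑ i ∈ Finset.range j, ((j.choose i : ℝ) * (x + k) ^ i) := by
      intro k
      have hb : (x + ((k + 1 : ℕ) : ℝ)) ^ j
          = ∑ i ∈ Finset.range (j + 1), (x + k) ^ i * (1 : ℝ) ^ (j - i) * (j.choose i) := by
        rw [show x + ((k + 1 : ℕ) : ℝ) = (x + k) + 1 by push_cast; ring, add_pow]
      rw [hb, Finset.sum_range_succ]
      simp only [one_pow, mul_one, Nat.choose_self, Nat.cast_one]
      have : ∑ i ∈ Finset.range j, (x + (k : ℝ)) ^ i * (j.choose i)
          = ∑ i ∈ Finset.range j, ((j.choose i : ℝ) * (x + k) ^ i) :=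
        Finset.sum_congr rfl fun i _ => mul_comm _ _
      rw [this]
      ring
    calc ∑ k ∈ Finset.range (t + 1), (-1 : ℝ) ^ k * (t.choose k) *
            ((x + (k : ℝ)) ^ j - (x + ((k + 1 : ℕ) : ℝ)) ^ j)
        = ∑ k ∈ Finset.range (t + 1), ∑ i ∈ Finset.range j,
            -((j.choose i : ℝ) * ((-1 : ℝ) ^ k * (t.choose k) * (x + k) ^ i)) := by
          refine Finset.sum_congr rfl fun k _ => ?_
          rw [hdiff k, Finset.sum_neg_distrib, mul_neg]
          exact congrArg Neg.neg (by rw [Finset.mul_sum]; exact Finset.sum_congr rfl fun i _ => by ring)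
      _ = -∑ i ∈ Finset.range j, (j.choose i : ℝ) *
            ∑ k ∈ Finset.range (t + 1), (-1 : ℝ) ^ k * (t.choose k) * (x + k) ^ i := by
          rw [Finset.sum_comm, ← Finset.sum_neg_distrib]
          refine Finset.sum_congr rfl fun i _ => ?_
          rw [Finset.mul_sum, ← Finset.sum_neg_distrib]
      _ = -∑ i ∈ Finset.range j, (j.choose i : ℝ) *
            (if i = t then (-1 : ℝ) ^ t * t.factorial else 0) := by
          refine congrArg Neg.neg (Finset.sum_congr rfl fun i hi => ?_)
          rw [ih i x (by have := Finset.mem_range.mp hi; omega)]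
      _ = if j = t + 1 then (-1 : ℝ) ^ (t + 1) * (t + 1).factorial else 0 := by
          by_cases hjt : j = t + 1
          · subst hjt
            rw [if_pos rfl]
            rw [Finset.sum_eq_single_of_mem t (Finset.self_mem_range_succ t)
              (fun i _ hne => by rw [if_neg hne, mul_zero])]
            rw [if_pos rfl]
            push_cast [Nat.choose_succ_self_right, Nat.factorial_succ]
            ring
          · rw [if_neg hjt]
            have hjle : j ≤ t := by omega
            rw [Finset.sum_eq_zero fun i hi => ?_, neg_zero]
            rw [if_neg (by have := Finset.mem_range.mp hi; omega), mul_zero]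

lemma hw_cauchy (M : ℕ) (x y : ℝ) :
    ∑ k ∈ Finset.range (M + 1),
        (M.choose k : ℝ) * (x + k) ^ k * (y + ((M - k : ℕ) : ℝ)) ^ (M - k)
      = ∑ t ∈ Finset.range (M + 1),
        (M.choose t : ℝ) * t.factorial * (x + y + M) ^ (M - t) := by
  have expand : ∀ k ∈ Finset.range (M + 1),
      (M.choose k : ℝ) * (x + k) ^ k * (y + ((M - k : ℕ) : ℝ)) ^ (M - k)
        = ∑ j ∈ Finset.range (M + 1 - k),
            (-1 : ℝ) ^ j * (M.choose k) * ((M - k).choose j) * (x + k) ^ (k + j)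
              * (x + y + M) ^ (M - k - j) := by
    intro k hk
    have hk' : k ≤ M := by have := Finset.mem_range.mp hk; omega
    have hbase : y + ((M - k : ℕ) : ℝ) = (-(x + k)) + (x + y + M) := by
      rw [Nat.cast_sub hk']; push_cast; ring
    have hp : (y + ((M - k : ℕ) : ℝ)) ^ (M - k)
        = ∑ j ∈ Finset.range (M - k + 1),
            (-(x + k)) ^ j * (x + y + M) ^ (M - k - j) * ((M - k).choose j) := by
      rw [hbase, add_pow]
    rw [hp, show M - k + 1 = M + 1 - k by omega, Finset.mul_sum]
    refine Finset.sum_congr rfl fun j hj => ?_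
    rw [neg_pow, pow_add]
    ring
  rw [Finset.sum_congr rfl expand,
    ← Finset.sum_range_diag_flip (M + 1) (fun k j => (-1 : ℝ) ^ j * (M.choose k)
        * ((M - k).choose j) * (x + k) ^ (k + j) * (x + y + M) ^ (M - k - j))]
  refine Finset.sum_congr rfl fun t ht => ?_
  have htM : t ≤ M := by have := Finset.mem_range.mp ht; omega
  have key := hw_diff_pow t t x le_rfl
  rw [if_pos rfl] at key
  have h2t : ((-1 : ℝ)) ^ t * (-1) ^ t = 1 := by
    rw [← pow_add, ← two_mul, pow_mul]; norm_num
  calc ∑ k ∈ Finset.range (t + 1),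
        (-1 : ℝ) ^ (t - k) * (M.choose k) * ((M - k).choose (t - k)) * (x + k) ^ (k + (t - k))
          * (x + y + M) ^ (M - k - (t - k))
      = ∑ k ∈ Finset.range (t + 1),
          ((M.choose t : ℝ) * (x + y + M) ^ (M - t) * (-1) ^ t)
            * ((-1 : ℝ) ^ k * (t.choose k) * (x + k) ^ t) := by
        refine Finset.sum_congr rfl fun k hk => ?_
        have hkt : k ≤ t := by have := Finset.mem_range.mp hk; omega
        have e1 : k + (t - k) = t := by omega
        have e2 : M - k - (t - k) = M - t := by omega
        have e3 : (M.choose k : ℝ) * ((M - k).choose (t - k)) = (M.choose t) * (t.choose k) := by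
          exact_mod_cast congrArg (Nat.cast : ℕ → ℝ) (Nat.choose_mul (n := M) hkt).symm
        have e4 : ((-1 : ℝ)) ^ (t - k) = (-1) ^ t * (-1) ^ k := by
          have h1 : ((-1 : ℝ)) ^ (t - k) * (-1) ^ k = (-1) ^ t := by
            rw [← pow_add]; congr 1; omega
          have h2 : ((-1 : ℝ)) ^ k * (-1) ^ k = 1 := by
            rw [← pow_add, ← two_mul, pow_mul]; norm_num
          calc ((-1 : ℝ)) ^ (t - k) = (-1) ^ (t - k) * ((-1) ^ k * (-1) ^ k) := by
                rw [h2, mul_one]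
            _ = (-1) ^ t * (-1) ^ k := by rw [← mul_assoc, h1]
        rw [e1, e2, e4]
        linear_combination ((-1 : ℝ) ^ t * (-1 : ℝ) ^ k * (x + k) ^ t
          * (x + y + M) ^ (M - t)) * e3
    _ = ((M.choose t : ℝ) * (x + y + M) ^ (M - t) * (-1) ^ t)
          * ∑ k ∈ Finset.range (t + 1), (-1 : ℝ) ^ k * (t.choose k) * (x + k) ^ t := by
        rw [Finset.mul_sum]
    _ = (M.choose t : ℝ) * t.factorial * (x + y + M) ^ (M - t) := by
        rw [key]
        linear_combination ((M.choose t : ℝ) * (x + y + M) ^ (M - t)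
          * (t.factorial : ℝ)) * h2t

lemma hw_tri_comm (n : ℕ) (f : ℕ → ℕ → ℝ) :
    ∑ a ∈ Finset.range n, ∑ b ∈ Finset.range (n - a), f a b
      = ∑ b ∈ Finset.range n, ∑ a ∈ Finset.range (n - b), f a b := by
  rw [← Finset.sum_range_diag_flip n f, ← Finset.sum_range_diag_flip n (fun a b => f b a)]
  refine Finset.sum_congr rfl fun m hm => ?_
  rw [← Finset.sum_range_reflect (fun k => f k (m - k)) (m + 1)]
  refine Finset.sum_congr rfl fun k hk => ?_
  have hk' : k ≤ m := by have := Finset.mem_range.mp hk; omega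
  congr 1 <;> omega

lemma hw_choose_swap {m a t : ℕ} (h : a + t ≤ m) :
    m.choose a * (m - a).choose t = m.choose t * (m - t).choose a := by
  have h1 := Nat.choose_mul (n := m) (k := a + t) (s := a) (Nat.le_add_right _ _)
  have h2 := Nat.choose_mul (n := m) (k := a + t) (s := t) (Nat.le_add_left _ _)
  rw [Nat.add_sub_cancel_left] at h1
  rw [Nat.add_sub_cancel] at h2
  rw [← h1, ← h2, Nat.choose_symm_add]

lemma hw_multinom (a b c : ℕ) :
    ((a + b + c).factorial : ℝ) / (a.factorial * b.factorial * c.factorial)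
      = ((a + b + c).choose a : ℝ) * ((b + c).choose b : ℝ) := by
  have h2 : (b + c).choose b * b.factorial * c.factorial = (b + c).factorial := by
    rw [Nat.choose_symm_add, Nat.add_choose_mul_factorial_mul_factorial]
  have h3 : (a + b + c).choose a * a.factorial * (b + c).factorial
      = (a + b + c).factorial := by
    have h := Nat.add_choose_mul_factorial_mul_factorial (b + c) a
    rw [Nat.add_comm (b + c) a, ← Nat.add_assoc] at h
    exact (Nat.mul_right_comm _ _ _).trans h
  have hnat : (a + b + c).choose a * (b + c).choose b
      * (a.factorial * b.factorial * c.factorial) = (a + b + c).factorial := by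
    calc (a + b + c).choose a * (b + c).choose b
          * (a.factorial * b.factorial * c.factorial)
        = (a + b + c).choose a * a.factorial
            * ((b + c).choose b * b.factorial * c.factorial) := by ring
      _ = (a + b + c).choose a * a.factorial * (b + c).factorial := by rw [h2]
      _ = (a + b + c).factorial := h3
  rw [div_eq_iff (by positivity)]
  exact_mod_cast (congrArg (Nat.cast : ℕ → ℝ) hnat).symm

lemma hw_tuple3 (m : ℕ) (F : ℕ → ℕ → ℕ → ℝ) :
    ∑ k ∈ Finset.Nat.antidiagonalTuple 3 m, F (k 0) (k 1) (k 2)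
      = ∑ p ∈ Finset.HasAntidiagonal.antidiagonal m, ∑ q ∈ Finset.HasAntidiagonal.antidiagonal p.2, F p.1 q.1 q.2 := by
  rw [← Finset.sum_sigma (Finset.HasAntidiagonal.antidiagonal m) (fun p => Finset.HasAntidiagonal.antidiagonal p.2)
    (fun x => F x.1.1 x.2.1 x.2.2)]
  refine Finset.sum_nbij' (fun k => ⟨(k 0, k 1 + k 2), (k 1, k 2)⟩)
    (fun p => ![p.1.1, p.2.1, p.2.2]) ?_ ?_ ?_ ?_ ?_
  · intro k hk
    have h := Finset.Nat.mem_antidiagonalTuple.mp hk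
    rw [Fin.sum_univ_three] at h
    simp only [Finset.mem_sigma, Finset.HasAntidiagonal.mem_antidiagonal]
    exact ⟨by omega, trivial⟩
  · intro p hp
    simp only [Finset.mem_sigma, Finset.HasAntidiagonal.mem_antidiagonal] at hp
    rw [Finset.Nat.mem_antidiagonalTuple, Fin.sum_univ_three]
    simp only [Matrix.cons_val_zero, Matrix.cons_val_one, Matrix.head_cons,
      Matrix.cons_val_two, Matrix.tail_cons]
    omega
  · intro k hk
    funext i
    fin_cases i <;> simp
  · intro p hp
    simp only [Finset.mem_sigma, Finset.HasAntidiagonal.mem_antidiagonal] at hp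
    obtain ⟨⟨a, b⟩, ⟨c, d⟩⟩ := p
    simp only at hp ⊢
    obtain ⟨h1, h2⟩ := hp
    simp only [Matrix.cons_val_zero, Matrix.cons_val_one, Matrix.head_cons,
      Matrix.cons_val_two, Matrix.tail_cons]
    subst h2
    rfl
  · intro k hk
    simp

/-- Hurwitz's multinomial identity with vanishing exponent shifts, for `n = 3`:
for every natural number `m` and all real `x₁, x₂, x₃`,
`Σ_{k₁+k₂+k₃=m} m!/(k₁!k₂!k₃!) (x₁+k₁)^{k₁} (x₂+k₂)^{k₂} (x₃+k₃)^{k₃}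
  = Σ_{k=0}^m C(m,k) (x₁+x₂+x₃+m)^{m-k} (k+1)!`. -/
theorem hurwitz_trinomial_identity (m : ℕ) (x₁ x₂ x₃ : ℝ) :
    (∑ k ∈ Finset.Nat.antidiagonalTuple 3 m,
      (m.factorial : ℝ) / ((k 0).factorial * (k 1).factorial * (k 2).factorial) *
        ((x₁ + k 0) ^ (k 0) * (x₂ + k 1) ^ (k 1) * (x₃ + k 2) ^ (k 2))) =
    ∑ k ∈ Finset.range (m + 1),
      (m.choose k : ℝ) * (x₁ + x₂ + x₃ + m) ^ (m - k) * ((k + 1).factorial : ℝ) := by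
  refine (hw_tuple3 m (fun a b c => (m.factorial : ℝ) /
      (a.factorial * b.factorial * c.factorial) *
      ((x₁ + a) ^ a * (x₂ + b) ^ b * (x₃ + c) ^ c))).trans ?_
  calc ∑ p ∈ Finset.HasAntidiagonal.antidiagonal m, ∑ q ∈ Finset.HasAntidiagonal.antidiagonal p.2,
        (m.factorial : ℝ) / ((p.1).factorial * (q.1).factorial * (q.2).factorial) *
          ((x₁ + p.1) ^ p.1 * (x₂ + q.1) ^ q.1 * (x₃ + q.2) ^ q.2)
      = ∑ p ∈ Finset.HasAntidiagonal.antidiagonal m, (m.choose p.1 : ℝ) * (x₁ + p.1) ^ p.1 *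
          ∑ q ∈ Finset.HasAntidiagonal.antidiagonal p.2,
            (p.2.choose q.1 : ℝ) * (x₂ + q.1) ^ q.1 * (x₃ + q.2) ^ q.2 := by
        refine Finset.sum_congr rfl fun p hp => ?_
        rw [Finset.mul_sum]
        refine Finset.sum_congr rfl fun q hq => ?_
        have hpm := Finset.HasAntidiagonal.mem_antidiagonal.mp hp
        have hq2 := Finset.HasAntidiagonal.mem_antidiagonal.mp hq
        rw [show m = p.1 + q.1 + q.2 by omega, hw_multinom p.1 q.1 q.2, ← hq2]
        ring
    _ = ∑ p ∈ Finset.HasAntidiagonal.antidiagonal m, (m.choose p.1 : ℝ) * (x₁ + p.1) ^ p.1 *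
          ∑ t ∈ Finset.range (p.2 + 1),
            (p.2.choose t : ℝ) * t.factorial * (x₂ + x₃ + p.2) ^ (p.2 - t) := by
        refine Finset.sum_congr rfl fun p hp => ?_
        rw [Finset.Nat.sum_antidiagonal_eq_sum_range_succ_mk]
        congr 1
        exact hw_cauchy p.2 x₂ x₃
    _ = ∑ a ∈ Finset.range (m + 1), ∑ t ∈ Finset.range (m + 1 - a),
          (m.choose a : ℝ) * (x₁ + a) ^ a *
            (((m - a).choose t : ℝ) * t.factorial
              * (x₂ + x₃ + ((m - a : ℕ) : ℝ)) ^ ((m - a) - t)) := by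
        rw [Finset.Nat.sum_antidiagonal_eq_sum_range_succ_mk]
        refine Finset.sum_congr rfl fun a ha => ?_
        have haM : a ≤ m := by have := Finset.mem_range.mp ha; omega
        rw [Finset.mul_sum, show m - a + 1 = m + 1 - a by omega]
    _ = ∑ t ∈ Finset.range (m + 1), ∑ a ∈ Finset.range (m + 1 - t),
          (m.choose a : ℝ) * (x₁ + a) ^ a *
            (((m - a).choose t : ℝ) * t.factorial
              * (x₂ + x₃ + ((m - a : ℕ) : ℝ)) ^ ((m - a) - t)) :=
        hw_tri_comm (m + 1) _
    _ = ∑ t ∈ Finset.range (m + 1), (m.choose t : ℝ) * t.factorial *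
          ∑ a ∈ Finset.range ((m - t) + 1),
            ((m - t).choose a : ℝ) * (x₁ + a) ^ a
              * ((x₂ + x₃ + t) + ((m - t - a : ℕ) : ℝ)) ^ ((m - t) - a) := by
        refine Finset.sum_congr rfl fun t ht => ?_
        have htm : t ≤ m := by have := Finset.mem_range.mp ht; omega
        rw [Finset.mul_sum, show m + 1 - t = (m - t) + 1 by omega]
        refine Finset.sum_congr rfl fun a ha => ?_
        have ham : a ≤ m - t := by have := Finset.mem_range.mp ha; omega
        have e1 : (m - a) - t = (m - t) - a := by omega
        have e2 : x₂ + x₃ + ((m - a : ℕ) : ℝ)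
            = (x₂ + x₃ + t) + ((m - t - a : ℕ) : ℝ) := by
          rw [show m - a = t + (m - t - a) by omega]
          push_cast
          ring
        have e3 : (m.choose a : ℝ) * ((m - a).choose t : ℝ)
            = (m.choose t : ℝ) * ((m - t).choose a : ℝ) := by
          exact_mod_cast congrArg (Nat.cast : ℕ → ℝ)
            (hw_choose_swap (show a + t ≤ m by omega))
        rw [e1, e2]
        linear_combination ((x₁ + a) ^ a * (t.factorial : ℝ)
          * ((x₂ + x₃ + t) + ((m - t - a : ℕ) : ℝ)) ^ ((m - t) - a)) * e3
    _ = ∑ t ∈ Finset.range (m + 1), (m.choose t : ℝ) * t.factorial *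
          ∑ l ∈ Finset.range ((m - t) + 1),
            ((m - t).choose l : ℝ) * l.factorial
              * (x₁ + (x₂ + x₃ + t) + ((m - t : ℕ) : ℝ)) ^ ((m - t) - l) := by
        refine Finset.sum_congr rfl fun t ht => ?_
        congr 1
        exact hw_cauchy (m - t) x₁ (x₂ + x₃ + t)
    _ = ∑ t ∈ Finset.range (m + 1), ∑ l ∈ Finset.range (m + 1 - t),
          (m.choose t : ℝ) * t.factorial *
            (((m - t).choose l : ℝ) * l.factorial
              * (x₁ + x₂ + x₃ + (m : ℝ)) ^ ((m - t) - l)) := by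
        refine Finset.sum_congr rfl fun t ht => ?_
        have htm : t ≤ m := by have := Finset.mem_range.mp ht; omega
        rw [Finset.mul_sum, show (m - t) + 1 = m + 1 - t by omega]
        refine Finset.sum_congr rfl fun l hl => ?_
        rw [show x₁ + (x₂ + x₃ + (t : ℝ)) + ((m - t : ℕ) : ℝ) = x₁ + x₂ + x₃ + m by
          rw [Nat.cast_sub htm]; ring]
    _ = ∑ u ∈ Finset.range (m + 1), ∑ t ∈ Finset.range (u + 1),
          (m.choose t : ℝ) * t.factorial *
            (((m - t).choose (u - t) : ℝ) * (u - t).factorial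
              * (x₁ + x₂ + x₃ + (m : ℝ)) ^ ((m - t) - (u - t))) :=
        (Finset.sum_range_diag_flip (m + 1) fun t l =>
          (m.choose t : ℝ) * t.factorial *
            (((m - t).choose l : ℝ) * l.factorial
              * (x₁ + x₂ + x₃ + (m : ℝ)) ^ ((m - t) - l))).symm
    _ = ∑ k ∈ Finset.range (m + 1),
          (m.choose k : ℝ) * (x₁ + x₂ + x₃ + m) ^ (m - k) * ((k + 1).factorial : ℝ) := by
        refine Finset.sum_congr rfl fun u hu => ?_
        have hum : u ≤ m := by have := Finset.mem_range.mp hu; omega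
        calc ∑ t ∈ Finset.range (u + 1),
              (m.choose t : ℝ) * t.factorial *
                (((m - t).choose (u - t) : ℝ) * (u - t).factorial
                  * (x₁ + x₂ + x₃ + (m : ℝ)) ^ ((m - t) - (u - t)))
            = ∑ t ∈ Finset.range (u + 1),
                (m.choose u : ℝ) * (x₁ + x₂ + x₃ + (m : ℝ)) ^ (m - u) * u.factorial := by
              refine Finset.sum_congr rfl fun t htu' => ?_
              have htu : t ≤ u := by have := Finset.mem_range.mp htu'; omega
              have e1 : (m - t) - (u - t) = m - u := by omega
              have e2 : (m.choose t : ℝ) * ((m - t).choose (u - t) : ℝ)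
                  = (m.choose u : ℝ) * (u.choose t : ℝ) := by
                exact_mod_cast congrArg (Nat.cast : ℕ → ℝ)
                  (Nat.choose_mul (n := m) htu).symm
              have e3 : (u.choose t : ℝ) * t.factorial * (u - t).factorial
                  = u.factorial := by
                exact_mod_cast congrArg (Nat.cast : ℕ → ℝ)
                  (Nat.choose_mul_factorial_mul_factorial htu)
              rw [e1]
              linear_combination ((t.factorial : ℝ) * ((u - t).factorial : ℝ)
                  * (x₁ + x₂ + x₃ + (m : ℝ)) ^ (m - u)) * e2
                + ((m.choose u : ℝ) * (x₁ + x₂ + x₃ + (m : ℝ)) ^ (m - u)) * e3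
          _ = (m.choose u : ℝ) * (x₁ + x₂ + x₃ + m) ^ (m - u)
                * ((u + 1).factorial : ℝ) := by
              rw [Finset.sum_const, Finset.card_range, nsmul_eq_mul, Nat.factorial_succ]
              push_cast
              ring
end
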